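/- Let n ≥ 1 be an integer and Δ ∈ ℂ[[x]], and set F = n·Δ + ∂((E−1)·Δ). Then F is a quasipolynomial if and only if there exists G ∈ ℂ[[x]] such that Δ = [∂]_n(G) and (E−1)·G is a quasipolynomial. (This is the characterization of quasifiniteness of the W_∞^{(n)}-module L(λ) in terms of its generating series Δ_λ(x): L(λ) is quasifinite iff nΔ_λ(x) + d/dx((e^x−1)Δ_λ(x)) is a quasipolynomial, iff Δ_λ(x) = [d/dx]_n(φ_λ(x)/(e^x−1)) for a quasipolynomial φ_λ with φ_λ(0)=0.) -/

import Mathlib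

open Polynomial

/-- The derivation `∂ = d/dx` on `ℂ[[x]]`, as a linear endomorphism. -/
noncomputable def Dop : Module.End ℂ (PowerSeries ℂ) :=
  (PowerSeries.derivative ℂ).toLinearMap

/-- The exponential power series `E = e^x = Σ_{m≥0} x^m/m!`. -/
noncomputable def E : PowerSeries ℂ := PowerSeries.exp ℂ

/-- The falling-factorial polynomial `[w]_n = w(w−1)⋯(w−n+1)` (with `[w]_0 = 1`). -/
noncomputable def ffp (n : ℕ) : ℂ[X] :=
  ∏ i ∈ Finset.range n, (X - C (i : ℂ))

/-- The operator `[∂]_n = ∂(∂−1)⋯(∂−n+1)` on `ℂ[[x]]`: the polynomial `[w]_n`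
evaluated at `∂`. -/
noncomputable def ffD (n : ℕ) : Module.End ℂ (PowerSeries ℂ) :=
  Polynomial.aeval Dop (ffp n)


/-- A formal power series is a quasipolynomial iff it satisfies a nontrivial linear
differential equation with constant coefficients (equivalently, it is the Taylor
series of a finite sum `Σ p_i(x)e^{α_i x}`). -/
def IsQuasiPoly (F : PowerSeries ℂ) : Prop :=
  ∃ q : ℂ[X], q ≠ 0 ∧ Polynomial.aeval Dop q F = 0

/-- Theorem 4.2: for n ≥ 1, `F = n·Δ + ∂((E−1)·Δ)` is a quasipolynomial
iff `Δ = [∂]_n G` for some `G` with `(E−1)·G` a quasipolynomial. -/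

lemma Dop_E : Dop E = E := by
  ext m
  simp [Dop, E, PowerSeries.coeff_derivative, PowerSeries.coeff_exp]
  have hf : ((m.factorial : ℂ)) ≠ 0 := Nat.cast_ne_zero.2 m.factorial_ne_zero
  have hm : ((m : ℂ) + 1) ≠ 0 := Nat.cast_add_one_ne_zero m
  rw [Nat.factorial_succ]
  push_cast
  field_simp
lemma Dop_mul (f g : PowerSeries ℂ) : Dop (f * g) = f * Dop g + g * Dop f := by
  show (PowerSeries.derivative ℂ) (f * g) =
    f * (PowerSeries.derivative ℂ) g + g * (PowerSeries.derivative ℂ) f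
  rw [Derivation.leibniz, smul_eq_mul, smul_eq_mul]
lemma Dop_E_mul (K : PowerSeries ℂ) : Dop (E * K) = E * (Dop K + K) := by
  rw [Dop_mul, Dop_E]; ring
lemma conj (p : ℂ[X]) (H : PowerSeries ℂ) :
    Polynomial.aeval Dop p (E * H) = E * (Polynomial.aeval (Dop + 1) p H) := by
  induction p using Polynomial.induction_on with
  | C a => simp [Algebra.algebraMap_eq_smul_one, mul_smul_comm]
  | add p q hp hq => simp [map_add, LinearMap.add_apply, hp, hq, mul_add]
  | monomial k a hk =>
      have e1 : C a * X ^ (k + 1) = X * (C a * X ^ k) := by ring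
      have h2 : (aeval Dop) (X * (C a * X ^ k)) = Dop * (aeval Dop) (C a * X ^ k) := by
        rw [map_mul, aeval_X]
      have h3 : (aeval (Dop + 1)) (X * (C a * X ^ k))
          = (Dop + 1) * (aeval (Dop + 1)) (C a * X ^ k) := by
        rw [map_mul, aeval_X]
      rw [e1, h2, h3, Module.End.mul_apply, Module.End.mul_apply, hk, Dop_E_mul,
        LinearMap.add_apply, Module.End.one_apply]
lemma ffp_succ (n : ℕ) : ffp (n + 1) = ffp n * (X - C (n : ℂ)) :=
  Finset.prod_range_succ _ n
lemma ffp_monic (n : ℕ) : (ffp n).Monic :=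
  monic_prod_of_monic _ _ fun i _ => monic_X_sub_C _
lemma ffp_ne_zero (n : ℕ) : ffp n ≠ 0 := (ffp_monic n).ne_zero
lemma ffp_comp (n : ℕ) : (ffp (n + 1)).comp (X + C 1) = (X + C 1) * ffp n := by
  unfold ffp
  rw [prod_comp]
  rw [Finset.prod_range_succ']
  simp only [sub_comp, X_comp, C_comp]
  rw [Nat.cast_zero, map_zero, sub_zero, mul_comm]
  congr 1
  apply Finset.prod_congr rfl
  intro i _
  rw [Nat.cast_add, Nat.cast_one, C_add]
  ring

/-- surjectivity of `∂ - a` -/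
lemma Dop_sub_surj (a : ℂ) : Function.Surjective (Dop - algebraMap ℂ (Module.End ℂ (PowerSeries ℂ)) a) := by
  intro H
  set g : ℕ → ℂ := fun m => Nat.rec 0
    (fun m gm => ((PowerSeries.coeff m) H + a * gm) / (m + 1)) m with hg
  refine ⟨PowerSeries.mk g, ?_⟩
  ext m
  have hm : ((m : ℂ) + 1) ≠ 0 := Nat.cast_add_one_ne_zero m
  have hgs : g (m + 1) = ((PowerSeries.coeff m) H + a * g m) / (m + 1) := rfl
  simp [Dop, PowerSeries.coeff_derivative, Module.algebraMap_end_apply, hgs,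
    PowerSeries.coeff_mk]
  field_simp
  ring
lemma ffD_surj (n : ℕ) : Function.Surjective (ffD n) := by
  induction n with
  | zero =>
      intro H
      exact ⟨H, by simp [ffD, ffp]⟩
  | succ n ih =>
      have h1 : ffD (n + 1)
          = ffD n * (Dop - algebraMap ℂ (Module.End ℂ (PowerSeries ℂ)) (n : ℂ)) := by
        rw [ffD, ffp_succ, map_mul, map_sub, aeval_X, aeval_C, ffD]
      rw [h1]
      exact ih.comp (Dop_sub_surj (n : ℂ))
lemma aeval_shift (p : ℂ[X]) :
    Polynomial.aeval (Dop + 1) p = Polynomial.aeval Dop (p.comp (X + C 1)) := by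
  rw [aeval_comp, map_add, aeval_X, aeval_C, map_one]
lemma key (n : ℕ) (G : PowerSeries ℂ) :
    (n : PowerSeries ℂ) * ffD n G + Dop ((E - 1) * ffD n G)
      = ffD (n + 1) ((E - 1) * G) := by
  set H := ffD n G with hH
  have h1 : ffD (n + 1) ((E - 1) * G) = ffD (n + 1) (E * G) - ffD (n + 1) G := by
    rw [sub_mul, one_mul, map_sub]
  have h2 : ffD (n + 1) (E * G) = E * (Dop H + H) := by
    rw [ffD, conj, aeval_shift, ffp_comp, map_mul, map_add, aeval_X, aeval_C, map_one,
      Module.End.mul_apply, LinearMap.add_apply, Module.End.one_apply, hH, ffD]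
  have h3 : ffD (n + 1) G = Dop H - (n : ℂ) • H := by
    rw [ffD, ffp_succ, mul_comm (ffp n), map_mul, map_sub, aeval_X, aeval_C,
      Module.End.mul_apply, LinearMap.sub_apply, Module.algebraMap_end_apply, hH, ffD]
  have h4 : Dop ((E - 1) * H) = E * (Dop H + H) - Dop H := by
    rw [sub_mul, one_mul, map_sub, Dop_E_mul]
  have h5 : (n : PowerSeries ℂ) * H = (n : ℂ) • H := by
    rw [Algebra.smul_def]
    norm_cast
  rw [h1, h2, h3, h4, h5]
  ring

theorem stmt14 (n : ℕ) (hn : 1 ≤ n) (Δ : PowerSeries ℂ) :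
    IsQuasiPoly ((n : PowerSeries ℂ) * Δ + Dop ((E - 1) * Δ)) ↔
      ∃ G : PowerSeries ℂ, Δ = ffD n G ∧ IsQuasiPoly ((E - 1) * G) := by
  constructor
  · rintro ⟨q, hq0, hq⟩
    obtain ⟨G, hG⟩ := ffD_surj n Δ
    refine ⟨G, hG.symm, q * ffp (n + 1), mul_ne_zero hq0 (ffp_ne_zero _), ?_⟩
    have hmul : (Polynomial.aeval Dop) (q * ffp (n + 1))
        = (Polynomial.aeval Dop) q * (Polynomial.aeval Dop) (ffp (n + 1)) := map_mul _ _ _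
    rw [hmul, Module.End.mul_apply]
    have : (Polynomial.aeval Dop) (ffp (n + 1)) ((E - 1) * G) = ffD (n + 1) ((E - 1) * G) := rfl
    rw [this, ← key n G, hG, hq]
  · rintro ⟨G, hG, q, hq0, hq⟩
    refine ⟨q, hq0, ?_⟩
    rw [hG, key n G]
    have : (Polynomial.aeval Dop) q (ffD (n + 1) ((E - 1) * G))
        = ((Polynomial.aeval Dop) q * (Polynomial.aeval Dop) (ffp (n + 1))) ((E - 1) * G) := rfl
    have hcomm : (Polynomial.aeval Dop) q * (Polynomial.aeval Dop) (ffp (n + 1))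
        = (Polynomial.aeval Dop) (ffp (n + 1)) * (Polynomial.aeval Dop) q := by
      rw [← map_mul, mul_comm, map_mul]
    rw [this, hcomm, Module.End.mul_apply, hq, map_zero]
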